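/- arXiv:2005.01671 — 6 statements merged into one kernel-verified Lean document; each statement's English description precedes it below -/
import Mathlib

section
/- For every x ∈ ℝⁿ and u ∈ ℝᵐ, writing x̃ = x − x*, ũ = u − u* and ỹ = G_N(x*)ᵀQx̃, the following power-balance identity holds: x̃ᵀQ[(J₀ + Σᵢ₌₁ᵐ Jᵢuᵢ − R)Qx + (G₀ + Σᵢ₌₁ᵐ Gᵢuᵢ)E] = −x̃ᵀQRQx̃ + ỹᵀũ. (In particular the map ũ ↦ ỹ is shifted passive for the converter with storage function ½x̃ᵀQx̃.) -/
open Matrix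

lemma sum_mulVec' {ι : Type*} {n : ℕ} (s : Finset ι) (M : ι → Matrix (Fin n) (Fin n) ℝ)
    (v : Fin n → ℝ) : (∑ i ∈ s, M i).mulVec v = ∑ i ∈ s, (M i).mulVec v := by
  funext k
  simp only [Matrix.mulVec, dotProduct, Finset.sum_apply, Matrix.sum_apply, Finset.sum_mul]
  rw [Finset.sum_comm]

lemma mulVec_sum' {ι : Type*} {n : ℕ} (s : Finset ι) (M : Matrix (Fin n) (Fin n) ℝ)
    (v : ι → Fin n → ℝ) : M.mulVec (∑ i ∈ s, v i) = ∑ i ∈ s, M.mulVec (v i) := by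
  funext k
  simp only [Matrix.mulVec, dotProduct, Finset.sum_apply, Finset.mul_sum]
  rw [Finset.sum_comm]

lemma dot_sum' {ι : Type*} {n : ℕ} (s : Finset ι) (v : Fin n → ℝ) (w : ι → Fin n → ℝ) :
    v ⬝ᵥ (∑ i ∈ s, w i) = ∑ i ∈ s, v ⬝ᵥ w i := by
  simp only [dotProduct, Finset.sum_apply, Finset.mul_sum]
  rw [Finset.sum_comm]

lemma skew_quad {n : ℕ} (S : Matrix (Fin n) (Fin n) ℝ) (hS : Sᵀ = -S) (v : Fin n → ℝ) :
    v ⬝ᵥ S.mulVec v = 0 := by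
  have h : v ⬝ᵥ S.mulVec v = Sᵀ.mulVec v ⬝ᵥ v := by
    rw [Matrix.dotProduct_mulVec, ← Matrix.vecMul_transpose, Matrix.transpose_transpose]
  rw [hS, Matrix.neg_mulVec, neg_dotProduct, dotProduct_comm] at h
  rw [dotProduct_comm]
  linarith [h]

/-- Power-balance identity / shifted passivity: with
`x̃ = x − x*`, `ũ = u − u*`, `ỹ = G_N(x*)ᵀ Q x̃`, one has
`x̃ᵀQ[(J₀ + Σ Jᵢuᵢ − R)Qx + (G₀ + Σ Gᵢuᵢ)E] = −x̃ᵀQRQx̃ + ỹᵀũ`. -/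
theorem shifted_passivity_power_balance {n m : ℕ}
    (J₀ : Matrix (Fin n) (Fin n) ℝ) (J : Fin m → Matrix (Fin n) (Fin n) ℝ)
    (R Q G₀ : Matrix (Fin n) (Fin n) ℝ) (G : Fin m → Matrix (Fin n) (Fin n) ℝ)
    (E : Fin n → ℝ) (xs : Fin n → ℝ) (us : Fin m → ℝ)
    (hJ₀ : J₀ᵀ = -J₀) (hJ : ∀ i, (J i)ᵀ = -(J i))
    (hR : R.PosDef) (hQ : Q.PosDef) (hQdiag : Q.IsDiag)
    -- admissible equilibrium
    (heq : 0 = (J₀ + ∑ i, us i • J i - R).mulVec (Q.mulVec xs)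
            + (G₀ + ∑ i, us i • G i).mulVec E)
    -- G_N(x) : n × m matrix whose i-th column is JᵢQx + GᵢE
    (GN : (Fin n → ℝ) → Matrix (Fin n) (Fin m) ℝ)
    (hGN : ∀ z, GN z = Matrix.of fun k i => ((J i).mulVec (Q.mulVec z) + (G i).mulVec E) k)
    (x : Fin n → ℝ) (u : Fin m → ℝ) :
    (x - xs) ⬝ᵥ Q.mulVec
        ((J₀ + ∑ i, u i • J i - R).mulVec (Q.mulVec x) + (G₀ + ∑ i, u i • G i).mulVec E)
      = -((x - xs) ⬝ᵥ (Q * R * Q).mulVec (x - xs))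
        + ((GN xs)ᵀ.mulVec (Q.mulVec (x - xs))) ⬝ᵥ (u - us) := by
  have hQT : Qᵀ = Q := by simpa using hQ.isHermitian.eq
  set xt : Fin n → ℝ := x - xs with hxt
  have hdot : ∀ (z : Fin n → ℝ), xt ⬝ᵥ Q.mulVec z = Q.mulVec xt ⬝ᵥ z := by
    intro z
    rw [Matrix.dotProduct_mulVec]
    conv_lhs => rw [← hQT, Matrix.vecMul_transpose]
  have hf : (J₀ + ∑ i, u i • J i - R).mulVec (Q.mulVec x) + (G₀ + ∑ i, u i • G i).mulVec E
      = (J₀ + ∑ i, u i • J i - R).mulVec (Q.mulVec xt)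
        + ∑ i, (u i - us i) • ((J i).mulVec (Q.mulVec xs) + (G i).mulVec E) := by
    have key : (J₀ + ∑ i, u i • J i - R).mulVec (Q.mulVec x) + (G₀ + ∑ i, u i • G i).mulVec E
        = ((J₀ + ∑ i, u i • J i - R).mulVec (Q.mulVec x) + (G₀ + ∑ i, u i • G i).mulVec E)
          - ((J₀ + ∑ i, us i • J i - R).mulVec (Q.mulVec xs) + (G₀ + ∑ i, us i • G i).mulVec E) := by
      rw [← heq]; abel
    rw [key, hxt]
    simp only [Matrix.add_mulVec, Matrix.sub_mulVec, Matrix.mulVec_sub, sum_mulVec',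
      Matrix.smul_mulVec, smul_sub, sub_smul, smul_add, Finset.sum_sub_distrib,
      Finset.sum_add_distrib]
    abel
  rw [hf, Matrix.mulVec_add, dotProduct_add]
  congr 1
  · -- quadratic part
    have hskew : (J₀ + ∑ i, u i • J i)ᵀ = -(J₀ + ∑ i, u i • J i) := by
      simp only [Matrix.transpose_add, Matrix.transpose_sum, Matrix.transpose_smul, hJ₀, hJ,
        smul_neg]
      simp only [Finset.sum_neg_distrib, neg_add]
      try abel
    have h1 : (J₀ + ∑ i, u i • J i - R) = (J₀ + ∑ i, u i • J i) + (-R) := by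
      rw [sub_eq_add_neg]
    rw [h1, Matrix.add_mulVec, Matrix.mulVec_add, dotProduct_add, hdot,
      skew_quad _ hskew, hdot, Matrix.neg_mulVec, dotProduct_neg]
    rw [zero_add, ← Matrix.mulVec_mulVec, ← Matrix.mulVec_mulVec, hdot]
  · -- control part
    rw [mulVec_sum', dot_sum']
    have hrhs : ((GN xs)ᵀ.mulVec (Q.mulVec xt)) ⬝ᵥ (u - us)
        = ∑ i, (((J i).mulVec (Q.mulVec xs) + (G i).mulVec E) ⬝ᵥ Q.mulVec xt) * (u i - us i) := by
      simp only [dotProduct, Matrix.mulVec, Matrix.transpose_apply, hGN, Matrix.of_apply,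
        Pi.sub_apply]
    rw [hrhs]
    refine Finset.sum_congr rfl fun i _ => ?_
    rw [Matrix.mulVec_smul, dotProduct_smul, smul_eq_mul, hdot, dotProduct_comm]
    ring
end

section
/- (Key finite-time identity.) Let γ > 0, Δ : ℝ≥0 → ℝ continuous, and θ ∈ ℝⁿ a constant vector. Suppose θ̂ : ℝ≥0 → ℝⁿ and ω : ℝ≥0 → ℝ are differentiable and satisfy θ̂̇(t) = γΔ(t)(Δ(t)θ − Δ(t)θ̂(t)) and ω̇(t) = −γΔ(t)²ω(t) with ω(0) = 1. Then ω(t) = exp(−γ∫₀ᵗΔ(s)²ds), ω is nonincreasing with 0 < ω(t) ≤ 1, and for all t ≥ 0 the identity (1 − ω(t))θ = θ̂(t) − ω(t)θ̂(0) holds. -/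
/-- Key finite-time identity. If `θ̂̇ = γΔ(Δθ − Δθ̂)` and
`ω̇ = −γΔ²ω` with `ω(0) = 1`, then `ω(t) = exp(−γ∫₀ᵗΔ²)`, `ω` is nonincreasing with
`0 < ω(t) ≤ 1`, and `(1 − ω(t))θ = θ̂(t) − ω(t)θ̂(0)` for all `t ≥ 0`. -/
theorem drem_key_finite_time_identity {n : ℕ}
    (γ : ℝ) (hγ : 0 < γ) (Δ : ℝ → ℝ) (hΔ : Continuous Δ) (θ : Fin n → ℝ)
    (θh : ℝ → Fin n → ℝ) (ω : ℝ → ℝ)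
    (hθh : ∀ t ≥ (0:ℝ), HasDerivAt θh ((γ * Δ t) • (Δ t • θ - Δ t • θh t)) t)
    (hω : ∀ t ≥ (0:ℝ), HasDerivAt ω (-(γ * (Δ t) ^ 2) * ω t) t)
    (hω0 : ω 0 = 1) :
    (∀ t ≥ (0:ℝ), ω t = Real.exp (-(γ * ∫ s in (0:ℝ)..t, (Δ s) ^ 2)))
    ∧ AntitoneOn ω (Set.Ici 0)
    ∧ (∀ t ≥ (0:ℝ), 0 < ω t ∧ ω t ≤ 1)
    ∧ (∀ t ≥ (0:ℝ), (1 - ω t) • θ = θh t - ω t • θh 0) := by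
  have hΔ2 : Continuous fun s => (Δ s) ^ 2 := hΔ.pow 2
  set F : ℝ → ℝ := fun u => ∫ s in (0:ℝ)..u, (Δ s) ^ 2 with hFdef
  have hF : ∀ t : ℝ, HasDerivAt F ((Δ t) ^ 2) t := fun t =>
    (hΔ2.integral_hasStrictDerivAt 0 t).hasDerivAt
  have hFc : Continuous F := by
    rw [continuous_iff_continuousAt]; exact fun t => (hF t).continuousAt
  have hF0 : F 0 = 0 := intervalIntegral.integral_same
  set E : ℝ → ℝ := fun u => Real.exp (γ * F u) with hEdef
  have hE : ∀ t, HasDerivAt E ((γ * (Δ t) ^ 2) * E t) t := by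
    intro t
    have := ((hF t).const_mul γ).exp
    simpa [E, mul_comm, mul_assoc, mul_left_comm] using this
  have hEc : Continuous E := Real.continuous_exp.comp (continuous_const.mul hFc)
  have hE0 : E 0 = 1 := by simp [E, hF0]
  have hEpos : ∀ t, 0 < E t := fun t => Real.exp_pos _
  have key : ∀ t ≥ (0:ℝ), ω t * E t = 1 := by
    intro t ht
    have hcont : ContinuousOn (fun u => ω u * E u) (Set.Icc 0 t) := by
      refine ContinuousOn.mul (fun x hx => ?_) hEc.continuousOn
      exact (hω x hx.1).continuousAt.continuousWithinAt
    have hderiv : ∀ x ∈ Set.Ico (0:ℝ) t,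
        HasDerivWithinAt (fun u => ω u * E u) 0 (Set.Ici x) x := by
      intro x hx
      have h := ((hω x hx.1).mul (hE x)).hasDerivWithinAt (s := Set.Ici x)
      refine HasDerivWithinAt.congr_deriv h ?_
      ring
    have := constant_of_has_deriv_right_zero hcont hderiv t (Set.right_mem_Icc.2 ht)
    simpa [hω0, hE0] using this
  have hωinv : ∀ t ≥ (0:ℝ), ω t = (E t)⁻¹ := by
    intro t ht
    have h := key t ht
    field_simp
    rw [eq_div_iff (hEpos t).ne']; linarith
  have hωval : ∀ t ≥ (0:ℝ), ω t = Real.exp (-(γ * F t)) := by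
    intro t ht
    rw [hωinv t ht, hEdef, ← Real.exp_neg]
  have hFnonneg : ∀ t ≥ (0:ℝ), 0 ≤ F t := fun t ht =>
    intervalIntegral.integral_nonneg ht (fun s _ => sq_nonneg _)
  refine ⟨hωval, ?_, ?_, ?_⟩
  · intro a ha b hb hab
    rw [hωval a ha, hωval b hb]
    apply Real.exp_le_exp.2
    have hadd : F a + (∫ s in a..b, (Δ s) ^ 2) = F b :=
      intervalIntegral.integral_add_adjacent_intervals
        (hΔ2.intervalIntegrable _ _) (hΔ2.intervalIntegrable _ _)
    have hnn : 0 ≤ ∫ s in a..b, (Δ s) ^ 2 :=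
      intervalIntegral.integral_nonneg hab (fun s _ => sq_nonneg _)
    nlinarith
  · intro t ht
    rw [hωval t ht]
    refine ⟨Real.exp_pos _, Real.exp_le_one_iff.2 ?_⟩
    have := hFnonneg t ht
    nlinarith
  · intro t ht
    have hcont : ContinuousOn (fun u => E u • (θh u - θ)) (Set.Icc 0 t) := by
      refine ContinuousOn.smul hEc.continuousOn (fun x hx => ?_)
      exact ((hθh x hx.1).continuousAt.sub continuousAt_const).continuousWithinAt
    have hderiv : ∀ x ∈ Set.Ico (0:ℝ) t,
        HasDerivWithinAt (fun u => E u • (θh u - θ)) 0 (Set.Ici x) x := by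
      intro x hx
      have h := ((hE x).smul ((hθh x hx.1).sub_const θ)).hasDerivWithinAt (s := Set.Ici x)
      refine HasDerivWithinAt.congr_deriv h ?_
      module
    have hconst := constant_of_has_deriv_right_zero hcont hderiv t (Set.right_mem_Icc.2 ht)
    rw [hE0, one_smul] at hconst
    have hsm : θh t - θ = ω t • (θh 0 - θ) := by
      rw [hωinv t ht, ← hconst, inv_smul_smul₀ (hEpos t).ne']
    have hθht : θh t = θ + ω t • (θh 0 - θ) := by
      rw [← hsm]; abel
    rw [hθht, sub_smul, one_smul, smul_sub]
    abel
end

section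
/- (Finite-time parameter recovery under interval excitation.) Let γ > 0, μ ∈ (0,1), t_c > 0, Δ : ℝ≥0 → ℝ continuous with ∫₀^{t_c} Δ(s)²ds ≥ −(1/γ)ln(1 − μ), and θ ∈ ℝⁿ constant. Suppose θ̂ and ω satisfy θ̂̇(t) = γΔ(t)²(θ − θ̂(t)), ω̇(t) = −γΔ(t)²ω(t), ω(0) = 1. Then for all t ≥ t_c one has ω(t) ≤ 1 − μ and θ = (1/(1 − ω(t)))[θ̂(t) − ω(t)θ̂(0)]. -/
open intervalIntegral Set

lemma const_of_deriv_zero_nonneg {g : ℝ → ℝ}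
    (h : ∀ t ≥ (0:ℝ), HasDerivAt g 0 t) : ∀ t ≥ (0:ℝ), g t = g 0 := by
  intro t ht
  exact constant_of_has_deriv_right_zero (f := g) (a := 0) (b := t)
    (fun x hx => (h x hx.1).continuousAt.continuousWithinAt)
    (fun x hx => (h x hx.1).hasDerivWithinAt) t ⟨ht, le_rfl⟩

/-- Finite-time parameter recovery under interval excitation. If
`∫₀^{t_c}Δ² ≥ −(1/γ)ln(1 − μ)`, `θ̂̇ = γΔ²(θ − θ̂)`, `ω̇ = −γΔ²ω`, `ω(0) = 1`, then for
all `t ≥ t_c` one has `ω(t) ≤ 1 − μ` and `θ = (1/(1 − ω(t)))[θ̂(t) − ω(t)θ̂(0)]`. -/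
theorem fct_parameter_recovery {n : ℕ}
    (γ μ tc : ℝ) (hγ : 0 < γ) (hμ : μ ∈ Set.Ioo (0:ℝ) 1) (htc : 0 < tc)
    (Δ : ℝ → ℝ) (hΔ : Continuous Δ)
    (hexc : -(1 / γ) * Real.log (1 - μ) ≤ ∫ s in (0:ℝ)..tc, (Δ s) ^ 2)
    (θ : Fin n → ℝ) (θh : ℝ → Fin n → ℝ) (ω : ℝ → ℝ)
    (hθh : ∀ t ≥ (0:ℝ), HasDerivAt θh ((γ * (Δ t) ^ 2) • (θ - θh t)) t)
    (hω : ∀ t ≥ (0:ℝ), HasDerivAt ω (-(γ * (Δ t) ^ 2) * ω t) t)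
    (hω0 : ω 0 = 1) :
    ∀ t ≥ tc, ω t ≤ 1 - μ ∧ θ = (1 - ω t)⁻¹ • (θh t - ω t • θh 0) := by
  obtain ⟨hμ0, hμ1⟩ := hμ
  set I : ℝ → ℝ := fun t => γ * ∫ s in (0:ℝ)..t, (Δ s) ^ 2 with hI
  have hΔ2 : Continuous fun s => (Δ s) ^ 2 := by continuity
  have hI' : ∀ t : ℝ, HasDerivAt I (γ * (Δ t) ^ 2) t := fun t =>
    ((hΔ2.integral_hasStrictDerivAt 0 t).hasDerivAt.const_mul γ)
  have hI0 : I 0 = 0 := by simp [hI]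
  -- ω t = exp (-(I t)) for t ≥ 0
  have hωI : ∀ t ≥ (0:ℝ), ω t = Real.exp (-(I t)) := by
    have hg : ∀ t ≥ (0:ℝ), HasDerivAt (fun t => ω t * Real.exp (I t)) 0 t := by
      intro t ht
      have := (hω t ht).fun_mul ((hI' t).exp)
      exact this.congr_deriv (by ring)
    intro t ht
    have := const_of_deriv_zero_nonneg hg t ht
    rw [hI0, hω0] at this
    simp only [Real.exp_zero, mul_one, one_mul] at this
    have hpos : Real.exp (I t) ≠ 0 := (Real.exp_pos _).ne'
    field_simp [Real.exp_neg]
    rw [Real.exp_neg]; exact eq_inv_of_mul_eq_one_left this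
  -- θ i - θh t i = ω t * (θ i - θh 0 i)
  have hkey : ∀ t ≥ (0:ℝ), ∀ i, θ i - θh t i = ω t * (θ i - θh 0 i) := by
    intro t ht i
    have hcomp : ∀ s ≥ (0:ℝ),
        HasDerivAt (fun s => (θ i - θh s i) * Real.exp (I s)) 0 s := by
      intro s hs
      have hθi : HasDerivAt (fun s => θh s i) (γ * (Δ s) ^ 2 * (θ i - θh s i)) s := by
        have := hasDerivAt_pi.mp (hθh s hs) i
        simpa [Pi.smul_apply, Pi.sub_apply, smul_eq_mul] using this
      have := ((hasDerivAt_const s (θ i)).fun_sub hθi).fun_mul ((hI' s).exp)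
      exact this.congr_deriv (by ring)
    have := const_of_deriv_zero_nonneg hcomp t ht
    rw [hI0] at this
    simp only [Real.exp_zero, mul_one] at this
    rw [hωI t ht]
    have hpos : Real.exp (I t) ≠ 0 := (Real.exp_pos _).ne'
    rw [Real.exp_neg]
    field_simp
    linarith [this]
  intro t htt
  have ht0 : (0:ℝ) ≤ t := le_of_lt (lt_of_lt_of_le htc htt)
  -- monotonicity of I
  have hImono : I tc ≤ I t := by
    have hsplit : (∫ s in (0:ℝ)..t, (Δ s)^2) =
        (∫ s in (0:ℝ)..tc, (Δ s)^2) + ∫ s in tc..t, (Δ s)^2 :=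
      (integral_add_adjacent_intervals (hΔ2.intervalIntegrable 0 tc)
        (hΔ2.intervalIntegrable tc t)).symm
    have hnn : 0 ≤ ∫ s in tc..t, (Δ s)^2 :=
      integral_nonneg htt (fun s _ => sq_nonneg _)
    have : (∫ s in (0:ℝ)..tc, (Δ s)^2) ≤ ∫ s in (0:ℝ)..t, (Δ s)^2 := by
      rw [hsplit]; linarith
    exact mul_le_mul_of_nonneg_left this hγ.le
  have hItc : -(I tc) ≤ Real.log (1 - μ) := by
    have h1 := mul_le_mul_of_nonneg_left hexc hγ.le
    have h2 : γ * (-(1 / γ) * Real.log (1 - μ)) = -Real.log (1 - μ) := by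
      field_simp
    rw [h2] at h1
    simp only [hI]
    linarith
  have hωle : ω t ≤ 1 - μ := by
    rw [hωI t ht0]
    calc Real.exp (-(I t)) ≤ Real.exp (-(I tc)) := Real.exp_le_exp.mpr (by linarith)
    _ ≤ Real.exp (Real.log (1 - μ)) := Real.exp_le_exp.mpr hItc
    _ = 1 - μ := Real.exp_log (by linarith)
  refine ⟨hωle, ?_⟩
  have hne : 1 - ω t ≠ 0 := by
    have : ω t < 1 := lt_of_le_of_lt hωle (by linarith)
    linarith
  funext i
  have hk := hkey t ht0 i
  simp only [Pi.smul_apply, Pi.sub_apply, smul_eq_mul]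
  field_simp
  nlinarith [hk]
end

section
/- (Proposition 2, FCT-GPEBO observer.) Consider the converter ẋ(t) = Λ(u(t))x(t) + (G₀ + Σᵢ₌₁ᵐ Gᵢuᵢ(t))E with Λ(u) := (J₀ + Σᵢ₌₁ᵐ Jᵢuᵢ − R)Q, continuous input u, measured output y_m(t) = Cx(t), C ∈ ℝ^{p×n}. Let λ > 0, γ > 0, μ ∈ (0,1), and let ξ, Φ, Y, Ω, ω, θ̂ be differentiable solutions of the observer: ξ̇ = Λ(u)ξ + (G₀ + Σᵢ₌₁ᵐ Gᵢuᵢ)E; Φ̇ = Λ(u)Φ, Φ(0) = Iₙ; Ẏ = −λY + λΦᵀCᵀ(y_m − Cξ), Y(0) = 0; Ω̇ = −λΩ + λΦᵀCᵀCΦ, Ω(0) = 0; ω̇ = −γΔ²ω, ω(0) = 1; θ̂̇ = γΔ(𝒴 − Δθ̂); where 𝒴 := adj{Ω}Y and Δ := det{Ω}. Define ω_c(t) := min{ω(t), 1 − μ}, θ̂_FCT(t) := (1/(1 − ω_c(t)))[θ̂(t) − ω_c(t)θ̂(0)] and x̂(t) := ξ(t) + Φ(t)θ̂_FCT(t). If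 there exists t_c > 0 with ∫₀^{t_c} Δ(s)²ds ≥ −(1/γ)ln(1 − μ), then x̂(t) = x(t) for all t ≥ t_c. -/
open Matrix

attribute [local instance] Matrix.normedAddCommGroup Matrix.normedSpace

private lemma mulVec_lipschitz {n : ℕ} (M : Matrix (Fin n) (Fin n) ℝ) {K : NNReal}
    (h : ∑ i, ∑ j, ‖M i j‖ ≤ (K : ℝ)) : LipschitzWith K (M.mulVec) := by
  apply LipschitzWith.of_dist_le_mul
  intro a b
  rw [dist_eq_norm, dist_eq_norm, ← Matrix.mulVec_sub]
  set z := a - b with hz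
  have hnn : (0:ℝ) ≤ (K:ℝ) * ‖z‖ := by positivity
  refine (pi_norm_le_iff_of_nonneg hnn).2 fun i => ?_
  calc ‖(M *ᵥ z) i‖ = ‖∑ j, M i j * z j‖ := by simp [Matrix.mulVec, dotProduct]
    _ ≤ ∑ j, ‖M i j * z j‖ := norm_sum_le _ _
    _ ≤ ∑ j, ‖M i j‖ * ‖z‖ := by
        refine Finset.sum_le_sum fun j _ => ?_
        rw [norm_mul]
        exact mul_le_mul_of_nonneg_left (norm_le_pi_norm z j) (norm_nonneg _)
    _ = (∑ j, ‖M i j‖) * ‖z‖ := by rw [Finset.sum_mul]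
    _ ≤ (∑ i, ∑ j, ‖M i j‖) * ‖z‖ := by
        refine mul_le_mul_of_nonneg_right ?_ (norm_nonneg _)
        exact Finset.single_le_sum
          (fun i _ => Finset.sum_nonneg fun j _ => norm_nonneg _) (Finset.mem_univ i)
    _ ≤ (K:ℝ) * ‖z‖ := mul_le_mul_of_nonneg_right h (norm_nonneg _)

private lemma hasDerivAt_mulVec_const {n : ℕ} {Φ : ℝ → Matrix (Fin n) (Fin n) ℝ}
    {Φ' : Matrix (Fin n) (Fin n) ℝ} {t : ℝ} (h : HasDerivAt Φ Φ' t) (θ : Fin n → ℝ) :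
    HasDerivAt (fun s => (Φ s).mulVec θ) (Φ'.mulVec θ) t := by
  have hentry : ∀ i j, HasDerivAt (fun s => Φ s i j) (Φ' i j) t := fun i j =>
    hasDerivAt_pi.1 (hasDerivAt_pi.1 h i) j
  rw [hasDerivAt_pi]
  intro i
  have := HasDerivAt.fun_sum (u := Finset.univ) (fun j (_ : j ∈ Finset.univ) =>
    (hentry i j).mul_const (θ j))
  simpa [Matrix.mulVec, dotProduct] using this

private lemma eq_init_of_hasDerivAt_zero {E : Type*} [NormedAddCommGroup E] [NormedSpace ℝ E]
    {F : ℝ → E} (h : ∀ s, 0 ≤ s → HasDerivAt F 0 s) {t : ℝ} (ht : 0 ≤ t) : F t = F 0 :=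
  constant_of_has_deriv_right_zero
    (fun s hs => (h s hs.1).continuousAt.continuousWithinAt)
    (fun s hs => (h s hs.1).hasDerivWithinAt) t ⟨ht, le_rfl⟩

/-- Proposition 2, FCT-GPEBO observer. Under the interval-excitation
assumption `∫₀^{t_c}Δ² ≥ −(1/γ)ln(1 − μ)`, the GPEBO+DREM observer reconstructs the
converter state in finite time: `x̂(t) = x(t)` for all `t ≥ t_c`. -/
theorem fct_gpebo_observer {n m p : ℕ}
    (J₀ : Matrix (Fin n) (Fin n) ℝ) (J : Fin m → Matrix (Fin n) (Fin n) ℝ)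
    (R Q G₀ : Matrix (Fin n) (Fin n) ℝ) (G : Fin m → Matrix (Fin n) (Fin n) ℝ)
    (E : Fin n → ℝ)
    (hJ₀ : J₀ᵀ = -J₀) (hJ : ∀ i, (J i)ᵀ = -(J i))
    (hR : R.PosDef) (hQ : Q.PosDef) (hQdiag : Q.IsDiag)
    -- Λ(u) = (J₀ + Σ Jᵢuᵢ − R)Q
    (Λ : (Fin m → ℝ) → Matrix (Fin n) (Fin n) ℝ)
    (hΛ : ∀ v, Λ v = (J₀ + ∑ i, v i • J i - R) * Q)
    -- plant, continuous input, measured output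
    (u : ℝ → Fin m → ℝ) (hu : Continuous u)
    (C : Matrix (Fin p) (Fin n) ℝ)
    (x : ℝ → Fin n → ℝ)
    (hx : ∀ t ≥ (0:ℝ), HasDerivAt x
      ((Λ (u t)).mulVec (x t) + (G₀ + ∑ i, u t i • G i).mulVec E) t)
    (ym : ℝ → Fin p → ℝ) (hym : ∀ t, ym t = C.mulVec (x t))
    -- observer tuning parameters
    (lam γ μ : ℝ) (hlam : 0 < lam) (hγ : 0 < γ) (hμ : μ ∈ Set.Ioo (0:ℝ) 1)
    -- observer states
    (ξ : ℝ → Fin n → ℝ) (Φ Ω : ℝ → Matrix (Fin n) (Fin n) ℝ)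
    (Y : ℝ → Fin n → ℝ) (ω : ℝ → ℝ) (θh : ℝ → Fin n → ℝ)
    -- 𝒴 = adj{Ω}Y and Δ = det{Ω}
    (Δ : ℝ → ℝ) (hΔ : ∀ t, Δ t = (Ω t).det)
    (Ycal : ℝ → Fin n → ℝ) (hYcal : ∀ t, Ycal t = (Ω t).adjugate.mulVec (Y t))
    -- observer dynamics
    (hξ : ∀ t ≥ (0:ℝ), HasDerivAt ξ
      ((Λ (u t)).mulVec (ξ t) + (G₀ + ∑ i, u t i • G i).mulVec E) t)
    (hΦ : ∀ t ≥ (0:ℝ), HasDerivAt Φ (Λ (u t) * Φ t) t) (hΦ0 : Φ 0 = 1)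
    (hY : ∀ t ≥ (0:ℝ), HasDerivAt Y
      (-(lam • Y t) + lam • ((Φ t)ᵀ * Cᵀ).mulVec (ym t - C.mulVec (ξ t))) t)
    (hY0 : Y 0 = 0)
    (hΩ : ∀ t ≥ (0:ℝ), HasDerivAt Ω
      (-(lam • Ω t) + lam • ((Φ t)ᵀ * Cᵀ * C * Φ t)) t)
    (hΩ0 : Ω 0 = 0)
    (hω : ∀ t ≥ (0:ℝ), HasDerivAt ω (-(γ * (Δ t) ^ 2) * ω t) t) (hω0 : ω 0 = 1)
    (hθh : ∀ t ≥ (0:ℝ), HasDerivAt θh ((γ * Δ t) • (Ycal t - Δ t • θh t)) t)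
    -- clipping and the FCT estimate
    (ωc : ℝ → ℝ) (hωc : ∀ t, ωc t = min (ω t) (1 - μ))
    (θFCT : ℝ → Fin n → ℝ)
    (hθFCT : ∀ t, θFCT t = (1 - ωc t)⁻¹ • (θh t - ωc t • θh 0))
    (xh : ℝ → Fin n → ℝ) (hxh : ∀ t, xh t = ξ t + (Φ t).mulVec (θFCT t))
    -- sufficient interval excitation (Assumption 1)
    (tc : ℝ) (htc : 0 < tc)
    (hexc : -(1 / γ) * Real.log (1 - μ) ≤ ∫ s in (0:ℝ)..tc, (Δ s) ^ 2) :
    ∀ t ≥ tc, xh t = x t := by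
  obtain ⟨hμ0, hμ1⟩ := hμ
  set θ : Fin n → ℝ := x 0 - ξ 0 with hθdef
  -- Step A: x s − ξ s = Φ s *ᵥ θ for s ≥ 0
  have hA : ∀ s, 0 ≤ s → x s - ξ s = (Φ s).mulVec θ := by
    intro s hs
    set proj : ℝ → ℝ := fun r => min (max r 0) s with hprojdef
    have hprojmem : ∀ r, proj r ∈ Set.Icc 0 s := fun r =>
      ⟨le_min (le_max_right r 0) hs, min_le_right _ _⟩
    have hprojeq : ∀ r ∈ Set.Icc 0 s, proj r = r := fun r hr => by
      simp only [hprojdef, max_eq_left hr.1, min_eq_left hr.2]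
    have hΛcont : Continuous fun r => Λ (u r) := by
      have h1 : (fun r => Λ (u r)) = fun r => (J₀ + ∑ i, u r i • J i - R) * Q :=
        funext fun r => hΛ (u r)
      rw [h1]
      have h2 : Continuous fun r => ∑ i, u r i • J i :=
        continuous_finset_sum _ fun i _ => ((continuous_apply i).comp hu).smul continuous_const
      exact ((continuous_const.add h2).sub continuous_const).matrix_mul continuous_const
    have hNc : Continuous fun r => ∑ i, ∑ j, ‖Λ (u r) i j‖ :=
      continuous_finset_sum _ fun i _ => continuous_finset_sum _ fun j _ =>
        ((continuous_apply j).comp ((continuous_apply i).comp hΛcont)).norm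
    obtain ⟨K, hK⟩ : ∃ K, ∀ r ∈ Set.Icc (0:ℝ) s, (∑ i, ∑ j, ‖Λ (u r) i j‖) ≤ K := by
      obtain ⟨K, hK⟩ := (isCompact_Icc (a := (0:ℝ)) (b := s)).bddAbove_image hNc.continuousOn
      exact ⟨K, fun r hr => hK ⟨r, hr, rfl⟩⟩
    set v : ℝ → (Fin n → ℝ) → (Fin n → ℝ) := fun r y => (Λ (u (proj r))).mulVec y with hvdef
    have hlip : ∀ r, LipschitzWith K.toNNReal (v r) := fun r =>
      mulVec_lipschitz _ (by
        rw [Real.coe_toNNReal']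
        exact le_trans (hK _ (hprojmem r)) (le_max_left _ _))
    have hEq : Set.EqOn (fun r => x r - ξ r) (fun r => (Φ r).mulVec θ) (Set.Icc 0 s) := by
      apply ODE_solution_unique_of_mem_Icc_right (v := v) (s := fun _ => Set.univ)
        (fun r _ => (hlip r).lipschitzOnWith)
        (fun r hr => (((hx r hr.1).sub (hξ r hr.1)).continuousAt).continuousWithinAt)
        ?_ (fun _ _ => trivial)
        (fun r hr => ((hasDerivAt_mulVec_const (hΦ r hr.1) θ).continuousAt).continuousWithinAt)
        ?_ (fun _ _ => trivial)
        ?_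
      · intro r hr
        have h := (hx r hr.1).sub (hξ r hr.1)
        have hvr : v r (x r - ξ r) = (Λ (u r)).mulVec (x r - ξ r) := by
          rw [hvdef]; simp only [hprojeq r (Set.Ico_subset_Icc_self hr)]
        refine HasDerivAt.hasDerivWithinAt ?_
        show HasDerivAt _ (v r (x r - ξ r)) r
        rw [hvr, Matrix.mulVec_sub]
        refine h.congr_deriv ?_
        abel
      · intro r hr
        have h := hasDerivAt_mulVec_const (hΦ r hr.1) θ
        have hvr : v r ((Φ r).mulVec θ) = (Λ (u r)).mulVec ((Φ r).mulVec θ) := by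
          rw [hvdef]; simp only [hprojeq r (Set.Ico_subset_Icc_self hr)]
        refine HasDerivAt.hasDerivWithinAt ?_
        rw [hvr, Matrix.mulVec_mulVec]
        exact h
      · show x 0 - ξ 0 = (Φ 0).mulVec θ
        rw [hΦ0, Matrix.one_mulVec]
    exact hEq ⟨hs, le_rfl⟩
  -- Step B : Y s = Ω s *ᵥ θ for s ≥ 0
  have hB : ∀ s, 0 ≤ s → Y s = (Ω s).mulVec θ := by
    intro s hs
    have key : ∀ r, 0 ≤ r →
        HasDerivAt (fun w => Real.exp (lam * w) • (Y w - (Ω w).mulVec θ)) 0 r := by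
      intro r hr
      have hD : HasDerivAt (fun w => Y w - (Ω w).mulVec θ)
          (-(lam • (Y r - (Ω r).mulVec θ))) r := by
        have h3 := (hY r hr).sub (hasDerivAt_mulVec_const (hΩ r hr) θ)
        have hymr : ym r - C.mulVec (ξ r) = C.mulVec ((Φ r).mulVec θ) := by
          rw [hym r, ← Matrix.mulVec_sub, hA r hr]
        rw [hymr] at h3
        have e1 : ((Φ r)ᵀ * Cᵀ).mulVec (C.mulVec ((Φ r).mulVec θ))
            = ((Φ r)ᵀ * Cᵀ * C * Φ r).mulVec θ := by
          simp only [Matrix.mulVec_mulVec, Matrix.mul_assoc]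
        have e2 : (-(lam • Ω r) + lam • ((Φ r)ᵀ * Cᵀ * C * Φ r)).mulVec θ
            = -(lam • (Ω r).mulVec θ) + lam • ((Φ r)ᵀ * Cᵀ * C * Φ r).mulVec θ := by
          rw [Matrix.add_mulVec, Matrix.neg_mulVec, Matrix.smul_mulVec,
            Matrix.smul_mulVec]
        refine h3.congr_deriv ?_
        rw [e1, e2]
        module
      have hExp : HasDerivAt (fun w => Real.exp (lam * w)) (lam * Real.exp (lam * r)) r := by
        simpa [mul_comm] using ((hasDerivAt_id r).const_mul lam).exp
      have h := hExp.smul hD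
      refine h.congr_deriv ?_
      simp only [smul_neg, smul_smul]
      module
    have h0 := eq_init_of_hasDerivAt_zero key hs
    simp only [hY0, hΩ0, Matrix.zero_mulVec, sub_zero, mul_zero, Real.exp_zero,
      sub_self, smul_zero] at h0
    have := smul_eq_zero.1 h0
    rcases this with h | h
    · exact absurd h (Real.exp_ne_zero _)
    · exact sub_eq_zero.1 h
  -- continuity of Δ on [0,∞), surrogate integrand g
  have hΔcont : ∀ s, 0 ≤ s → ContinuousAt Δ s := by
    intro s hs
    have hfun : Δ = fun r => (Ω r).det := funext hΔ
    rw [hfun]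
    exact (Continuous.matrix_det continuous_id).continuousAt.comp
      (hΩ s hs).differentiableAt.continuousAt
  set g : ℝ → ℝ := fun s => (Δ (max s 0)) ^ 2 with hgdef
  have hgcont : Continuous g := by
    have h1 : Continuous fun s : ℝ => Δ (max s 0) := by
      rw [continuous_iff_continuousAt]
      intro s
      have hmax : Continuous fun s : ℝ => max s 0 := continuous_id.max continuous_const
      exact ContinuousAt.comp (g := Δ) (f := fun s : ℝ => max s 0)
        (hΔcont _ (le_max_right s 0)) hmax.continuousAt
    exact h1.pow 2
  have hgeq : ∀ s, 0 ≤ s → g s = (Δ s) ^ 2 := fun s hs => by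
    simp only [hgdef, max_eq_left hs]
  have hgnonneg : ∀ s, 0 ≤ g s := fun s => sq_nonneg _
  set I : ℝ → ℝ := fun r => ∫ s in (0:ℝ)..r, g s with hIdef
  have hI : ∀ r, HasDerivAt I (g r) r := fun r =>
    intervalIntegral.integral_hasDerivAt_right (hgcont.intervalIntegrable 0 r)
      ⟨Set.univ, Filter.univ_mem, hgcont.aestronglyMeasurable.restrict⟩ hgcont.continuousAt
  have hI0 : I 0 = 0 := intervalIntegral.integral_same
  have hImono : ∀ r, tc ≤ r → I tc ≤ I r := by
    intro r hr
    have hadd : I tc + ∫ s in tc..r, g s = I r :=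
      intervalIntegral.integral_add_adjacent_intervals
        (hgcont.intervalIntegrable 0 tc) (hgcont.intervalIntegrable tc r)
    have hnn : 0 ≤ ∫ s in tc..r, g s :=
      intervalIntegral.integral_nonneg hr (fun s _ => hgnonneg s)
    linarith
  have hItc : -(1 / γ) * Real.log (1 - μ) ≤ I tc := by
    have hcongr : (∫ s in (0:ℝ)..tc, (Δ s) ^ 2) = I tc := by
      refine intervalIntegral.integral_congr ?_
      intro s hs
      rw [Set.uIcc_of_le htc.le] at hs
      exact (hgeq s hs.1).symm
    linarith [hexc]
  -- exponential auxiliary derivative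
  have hexp : ∀ r, HasDerivAt (fun w => Real.exp (γ * I w))
      ((γ * g r) * Real.exp (γ * I r)) r := by
    intro r
    have := ((hI r).const_mul γ).exp
    convert this using 1
    ring
  -- ω closed form
  have hωeq : ∀ s, 0 ≤ s → ω s = Real.exp (-(γ * I s)) := by
    intro s hs
    have key : ∀ r, 0 ≤ r → HasDerivAt (fun w => ω w * Real.exp (γ * I w)) 0 r := by
      intro r hr
      have h := (hω r hr).mul (hexp r)
      refine h.congr_deriv ?_
      rw [hgeq r hr]
      ring
    have h0 := eq_init_of_hasDerivAt_zero key hs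
    rw [hI0, mul_zero, Real.exp_zero, mul_one, hω0] at h0
    have hne : Real.exp (γ * I s) ≠ 0 := Real.exp_ne_zero _
    rw [Real.exp_neg]
    field_simp [hne] at h0 ⊢
    linarith [h0]
  -- θh evolution
  have hth : ∀ s, 0 ≤ s → θh s - θ = ω s • (θh 0 - θ) := by
    intro s hs
    have key : ∀ r, 0 ≤ r → HasDerivAt (fun w => Real.exp (γ * I w) • (θh w - θ)) 0 r := by
      intro r hr
      have hYcalr : Ycal r = Δ r • θ := by
        rw [hYcal r, hB r hr, Matrix.mulVec_mulVec, Matrix.adjugate_mul, ← hΔ r,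
          Matrix.smul_mulVec, Matrix.one_mulVec]
      have hd := hθh r hr
      rw [hYcalr] at hd
      have hd' : HasDerivAt (fun w => θh w - θ) ((-(γ * Δ r ^ 2)) • (θh r - θ)) r := by
        refine (hd.sub_const θ).congr_deriv ?_
        simp only [smul_sub, smul_smul]
        module
      have h := (hexp r).smul hd'
      refine h.congr_deriv ?_
      rw [hgeq r hr]
      simp only [smul_smul]
      module
    have h0 := eq_init_of_hasDerivAt_zero key hs
    rw [hI0, mul_zero, Real.exp_zero, one_smul] at h0
    have h1 : θh s - θ = (Real.exp (γ * I s))⁻¹ • (θh 0 - θ) := by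
      rw [eq_inv_smul_iff₀ (Real.exp_ne_zero _)]
      exact h0
    rw [h1, hωeq s hs, Real.exp_neg]
  -- ω bound for t ≥ tc
  have hωle : ∀ s, tc ≤ s → ω s ≤ 1 - μ := by
    intro s hs
    have hs0 : 0 ≤ s := le_trans htc.le hs
    rw [hωeq s hs0]
    have hIs : -(1 / γ) * Real.log (1 - μ) ≤ I s := le_trans hItc (hImono s hs)
    have hlog : -(γ * I s) ≤ Real.log (1 - μ) := by
      have h := mul_le_mul_of_nonneg_left hIs hγ.le
      have he : γ * (-(1 / γ) * Real.log (1 - μ)) = -Real.log (1 - μ) := by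
        field_simp
      rw [he] at h
      linarith
    calc Real.exp (-(γ * I s)) ≤ Real.exp (Real.log (1 - μ)) := Real.exp_le_exp.2 hlog
      _ = 1 - μ := Real.exp_log (by linarith)
  -- conclusion
  intro t ht
  have ht0 : 0 ≤ t := le_trans htc.le ht
  have hω_le := hωle t ht
  have hωct : ωc t = ω t := by rw [hωc]; exact min_eq_left hω_le
  have h1ω : 1 - ω t ≠ 0 := ne_of_gt (by linarith)
  have hθF : θFCT t = θ := by
    have hth' : θh t = θ + ω t • (θh 0 - θ) := by
      have := hth t ht0
      linear_combination (norm := module) this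
    rw [hθFCT, hωct, hth']
    have hcomb : θ + ω t • (θh 0 - θ) - ω t • θh 0 = (1 - ω t) • θ := by module
    rw [hcomb, smul_smul, inv_mul_cancel₀ h1ω, one_smul]
  rw [hxh, hθF]
  have := hA t ht0
  have hxt : (Φ t).mulVec θ = x t - ξ t := this.symm
  rw [hxt]
  abel
end

section
/- (Exponential decay of the state transition matrix.) Let Jᵢ = −Jᵢᵀ ∈ ℝ^{n×n} (i = 0,…,m) be skew-symmetric, R = Rᵀ > 0, Q = Qᵀ > 0, u : ℝ≥0 → ℝᵐ continuous, and let Φ : ℝ≥0 → ℝ^{n×n} be differentiable with Φ̇(t) = (J₀ + Σᵢ₌₁ᵐ Jᵢuᵢ(t) − R)QΦ(t). Then U(t) := ½tr(Φ(t)ᵀQΦ(t)) satisfies U′(t) = −tr(Φ(t)ᵀQRQΦ(t)), and there exists c > 0, depending only on Q and R, such that U′(t) ≤ −cU(t) and hence tr(Φ(t)ᵀQΦ(t)) ≤ e^{−ct}tr(Φ(0)ᵀQΦ(0)) for all t ≥ 0. In particular Φ(t) → 0 exponentially and Φ is bounded. -/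
open Matrix

attribute [local instance] Matrix.normedAddCommGroup Matrix.normedSpace

private lemma mulVec_dot_le' {n : ℕ} (A : Matrix (Fin n) (Fin n) ℝ) (y : Fin n → ℝ) :
    (A *ᵥ y) ⬝ᵥ (A *ᵥ y) ≤ (∑ i, ∑ j, A i j ^ 2) * (y ⬝ᵥ y) := by
  have h : ∀ i, (A *ᵥ y) i * (A *ᵥ y) i ≤ (∑ j, A i j ^ 2) * (y ⬝ᵥ y) := by
    intro i
    have := Finset.sum_mul_sq_le_sq_mul_sq Finset.univ (fun j => A i j) y
    simpa [Matrix.mulVec, dotProduct, ← sq] using this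
  calc (A *ᵥ y) ⬝ᵥ (A *ᵥ y) = ∑ i, (A *ᵥ y) i * (A *ᵥ y) i := rfl
    _ ≤ ∑ i : Fin n, (∑ j, A i j ^ 2) * (y ⬝ᵥ y) := Finset.sum_le_sum fun i _ => h i
    _ = (∑ i, ∑ j, A i j ^ 2) * (y ⬝ᵥ y) := by rw [Finset.sum_mul]

private lemma dot_self_nonneg' {n : ℕ} (x : Fin n → ℝ) : 0 ≤ x ⬝ᵥ x :=
  Finset.sum_nonneg fun i _ => mul_self_nonneg (x i)

open scoped MatrixOrder in
private lemma posdef_lower' {n : ℕ} {M : Matrix (Fin n) (Fin n) ℝ} (hM : M.PosDef) :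
    ∃ c > 0, ∀ x : Fin n → ℝ, c * (x ⬝ᵥ x) ≤ x ⬝ᵥ (M *ᵥ x) := by
  set B := CFC.sqrt M with hBdef
  have hBB : B * B = M := CFC.sqrt_mul_sqrt_self M hM.posSemidef.nonneg
  have hBsym : Bᵀ = B := by
    rw [← Matrix.conjTranspose_eq_transpose_of_trivial]
    exact (Matrix.nonneg_iff_posSemidef.1 (CFC.sqrt_nonneg M)).1
  have hdet : IsUnit B.det := by
    have hMdet := hM.det_pos
    rw [← hBB, Matrix.det_mul] at hMdet
    have : B.det ≠ 0 := fun h => by simp [h] at hMdet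
    exact this.isUnit
  have hinv : B⁻¹ * B = 1 := Matrix.nonsing_inv_mul B hdet
  set K := ∑ i, ∑ j, (B⁻¹) i j ^ 2 with hK
  have hK0 : 0 ≤ K := Finset.sum_nonneg fun i _ => Finset.sum_nonneg fun j _ => sq_nonneg _
  refine ⟨1 / (K + 1), by positivity, fun x => ?_⟩
  set y := B *ᵥ x with hy
  have h1 : x ⬝ᵥ (M *ᵥ x) = y ⬝ᵥ y := by
    rw [← hBB, ← Matrix.mulVec_mulVec, Matrix.dotProduct_mulVec, ← Matrix.mulVec_transpose, hBsym]
  have h2 : x = B⁻¹ *ᵥ y := by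
    rw [hy, Matrix.mulVec_mulVec, hinv, Matrix.one_mulVec]
  have h3 : x ⬝ᵥ x ≤ K * (y ⬝ᵥ y) := by
    rw [h2]; exact mulVec_dot_le' _ _
  have h4 : 0 ≤ y ⬝ᵥ y := dot_self_nonneg' y
  rw [h1, div_mul_eq_mul_div, one_mul, div_le_iff₀ (by positivity)]
  nlinarith

private lemma quad_upper' {n : ℕ} (A : Matrix (Fin n) (Fin n) ℝ) :
    ∃ C > 0, ∀ y : Fin n → ℝ, y ⬝ᵥ (A *ᵥ y) ≤ C * (y ⬝ᵥ y) := by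
  set K := ∑ i, ∑ j, A i j ^ 2 with hK
  have hK0 : 0 ≤ K := Finset.sum_nonneg fun i _ => Finset.sum_nonneg fun j _ => sq_nonneg _
  refine ⟨(1 + K) / 2, by positivity, fun y => ?_⟩
  have h1 : y ⬝ᵥ (A *ᵥ y) ≤ ((y ⬝ᵥ y) + (A *ᵥ y) ⬝ᵥ (A *ᵥ y)) / 2 := by
    have hpt : ∀ i, y i * (A *ᵥ y) i ≤ (y i * y i + (A *ᵥ y) i * (A *ᵥ y) i) / 2 := by
      intro i; nlinarith [sq_nonneg (y i - (A *ᵥ y) i)]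
    calc y ⬝ᵥ (A *ᵥ y) = ∑ i, y i * (A *ᵥ y) i := rfl
      _ ≤ ∑ i, (y i * y i + (A *ᵥ y) i * (A *ᵥ y) i) / 2 := Finset.sum_le_sum fun i _ => hpt i
      _ = ((y ⬝ᵥ y) + (A *ᵥ y) ⬝ᵥ (A *ᵥ y)) / 2 := by
          rw [dotProduct, dotProduct, ← Finset.sum_add_distrib, Finset.sum_div]
  have h2 := mulVec_dot_le' A y
  have h3 := dot_self_nonneg' y
  nlinarith

private lemma trace_expand' {n : ℕ} (Q A B : Matrix (Fin n) (Fin n) ℝ) :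
    (Aᵀ * Q * B).trace = ∑ j, ∑ k, ∑ i, A i j * Q i k * B k j := by
  simp [Matrix.trace, Matrix.mul_apply, Matrix.diag, Finset.sum_mul]

private lemma trace_col' {n : ℕ} (M X : Matrix (Fin n) (Fin n) ℝ) :
    (Xᵀ * M * X).trace = ∑ j, (fun i => X i j) ⬝ᵥ (M *ᵥ (fun i => X i j)) := by
  rw [trace_expand']
  refine Finset.sum_congr rfl fun j _ => ?_
  rw [Finset.sum_comm]
  simp [dotProduct, Matrix.mulVec, Finset.mul_sum, mul_assoc]

private lemma key_compare' {n : ℕ} {R Q : Matrix (Fin n) (Fin n) ℝ} (hR : R.PosDef) (hQ : Q.PosDef)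
    (hQs : Qᵀ = Q) :
    ∃ c > 0, ∀ X : Matrix (Fin n) (Fin n) ℝ,
      c * (Xᵀ * Q * X).trace ≤ (Xᵀ * Q * R * Q * X).trace := by
  obtain ⟨cR, hcR, hlR⟩ := posdef_lower' hR
  obtain ⟨C, hC, hupC⟩ := quad_upper' Q⁻¹
  have hQdet : IsUnit Q.det := hQ.det_pos.ne'.isUnit
  have hQinv : Q⁻¹ * Q = 1 := Matrix.nonsing_inv_mul Q hQdet
  refine ⟨cR / C, by positivity, fun X => ?_⟩
  have hcol : ∀ φ : Fin n → ℝ, (cR / C) * (φ ⬝ᵥ (Q *ᵥ φ)) ≤ φ ⬝ᵥ ((Q * R * Q) *ᵥ φ) := by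
    intro φ
    set y := Q *ᵥ φ with hy
    have h1 : φ ⬝ᵥ ((Q * R * Q) *ᵥ φ) = y ⬝ᵥ (R *ᵥ y) := by
      rw [← Matrix.mulVec_mulVec, ← Matrix.mulVec_mulVec, Matrix.dotProduct_mulVec,
        ← Matrix.mulVec_transpose, hQs]
    have h2 : φ = Q⁻¹ *ᵥ y := by rw [hy, Matrix.mulVec_mulVec, hQinv, Matrix.one_mulVec]
    have h3 : φ ⬝ᵥ (Q *ᵥ φ) ≤ C * (y ⬝ᵥ y) := by
      calc φ ⬝ᵥ (Q *ᵥ φ) = y ⬝ᵥ (Q⁻¹ *ᵥ y) := by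
            rw [← hy]; nth_rewrite 1 [h2]; rw [dotProduct_comm]
        _ ≤ C * (y ⬝ᵥ y) := hupC y
    have h4 := hlR y
    rw [h1]
    calc (cR / C) * (φ ⬝ᵥ (Q *ᵥ φ)) ≤ (cR / C) * (C * (y ⬝ᵥ y)) := by
          apply mul_le_mul_of_nonneg_left h3 (by positivity)
      _ = cR * (y ⬝ᵥ y) := by field_simp
      _ ≤ y ⬝ᵥ (R *ᵥ y) := h4
  have e1 : (Xᵀ * Q * R * Q * X).trace
      = ∑ j, (fun i => X i j) ⬝ᵥ ((Q * R * Q) *ᵥ (fun i => X i j)) := by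
    rw [show Xᵀ * Q * R * Q * X = Xᵀ * (Q * R * Q) * X by noncomm_ring, trace_col']
  rw [e1, trace_col', Finset.mul_sum]
  exact Finset.sum_le_sum fun j _ => hcol _

private lemma entry_sq_le' {n : ℕ} {Q : Matrix (Fin n) (Fin n) ℝ} {cQ : ℝ} (hcQ : 0 < cQ)
    (hl : ∀ x : Fin n → ℝ, cQ * (x ⬝ᵥ x) ≤ x ⬝ᵥ (Q *ᵥ x))
    (X : Matrix (Fin n) (Fin n) ℝ) (i j : Fin n) :
    cQ * (X i j) ^ 2 ≤ (Xᵀ * Q * X).trace := by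
  rw [trace_col']
  have hterm : ∀ k : Fin n, (0:ℝ) ≤ (fun i => X i k) ⬝ᵥ (Q *ᵥ (fun i => X i k)) := by
    intro k
    have h1 := hl (fun i => X i k)
    have h2 := dot_self_nonneg' (fun i => X i k)
    nlinarith
  have hsingle : (fun i' => X i' j) ⬝ᵥ (Q *ᵥ (fun i' => X i' j)) ≤
      ∑ k, (fun i' => X i' k) ⬝ᵥ (Q *ᵥ (fun i' => X i' k)) :=
    Finset.single_le_sum (fun k _ => hterm k) (Finset.mem_univ j)
  have h3 : cQ * (X i j) ^ 2 ≤ cQ * ((fun i' => X i' j) ⬝ᵥ (fun i' => X i' j)) := by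
    apply mul_le_mul_of_nonneg_left _ hcQ.le
    have : (X i j)^2 ≤ ∑ i', X i' j * X i' j := by
      have h4 : X i j * X i j ≤ ∑ i', X i' j * X i' j :=
        Finset.single_le_sum (f := fun i' => X i' j * X i' j)
        (fun i' _ => mul_self_nonneg _) (Finset.mem_univ i)
      nlinarith [h4]
    simpa [dotProduct] using this
  exact le_trans h3 (le_trans (hl _) hsingle)

private lemma trace_form_nonneg' {n : ℕ} {Q : Matrix (Fin n) (Fin n) ℝ} {cQ : ℝ}
    (hcQ : 0 < cQ) (hl : ∀ x : Fin n → ℝ, cQ * (x ⬝ᵥ x) ≤ x ⬝ᵥ (Q *ᵥ x))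
    (X : Matrix (Fin n) (Fin n) ℝ) : 0 ≤ (Xᵀ * Q * X).trace := by
  rw [trace_col']
  refine Finset.sum_nonneg fun k _ => ?_
  have h1 := hl (fun i => X i k)
  have h2 := dot_self_nonneg' (fun i => X i k)
  nlinarith

private lemma skew_trace_zero' {n : ℕ} {W A : Matrix (Fin n) (Fin n) ℝ} (hWt : Wᵀ = -W) :
    (Aᵀ * W * A).trace = 0 := by
  have h5 : (Aᵀ * W * A)ᵀ = -(Aᵀ * W * A) := by
    rw [Matrix.transpose_mul, Matrix.transpose_mul, Matrix.transpose_transpose, hWt]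
    simp [Matrix.mul_assoc]
  have h6 := Matrix.trace_transpose (Aᵀ * W * A)
  rw [h5, Matrix.trace_neg] at h6
  linarith

private lemma hasDerivAt_traceform' {n : ℕ} (Q : Matrix (Fin n) (Fin n) ℝ)
    {Φ : ℝ → Matrix (Fin n) (Fin n) ℝ} {D : Matrix (Fin n) (Fin n) ℝ} {t : ℝ}
    (h : HasDerivAt Φ D t) :
    HasDerivAt (fun s => ((Φ s)ᵀ * Q * Φ s).trace)
      ((Dᵀ * Q * Φ t).trace + ((Φ t)ᵀ * Q * D).trace) t := by
  have he : ∀ i j, HasDerivAt (fun s => Φ s i j) (D i j) t := by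
    intro i j
    exact (hasDerivAt_pi.1 ((hasDerivAt_pi.1 h) i)) j
  have base : HasDerivAt (fun s => ∑ j, ∑ k, ∑ i, Φ s i j * Q i k * Φ s k j)
      (∑ j : Fin n, ∑ k : Fin n, ∑ i : Fin n,
        (D i j * Q i k * Φ t k j + Φ t i j * Q i k * D k j)) t := by
    refine HasDerivAt.fun_sum fun j _ => ?_
    refine HasDerivAt.fun_sum fun k _ => ?_
    refine HasDerivAt.fun_sum fun i _ => ?_
    exact ((he i j).mul_const (Q i k)).mul (he k j)
  have hfun : (fun s => ((Φ s)ᵀ * Q * Φ s).trace)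
      = fun s => ∑ j, ∑ k, ∑ i, Φ s i j * Q i k * Φ s k j :=
    funext fun s => trace_expand' Q (Φ s) (Φ s)
  rw [hfun, trace_expand', trace_expand']
  convert base using 1
  simp [Finset.sum_add_distrib]

/-- Exponential decay of the state transition matrix. For
`Φ̇ = (J₀ + Σ Jᵢuᵢ(t) − R)QΦ`, the function `U = ½tr(ΦᵀQΦ)` satisfies
`U′ = −tr(ΦᵀQRQΦ)` and there is `c > 0` (depending only on `Q` and `R`) with
`U′ ≤ −cU`, hence `tr(Φ(t)ᵀQΦ(t)) ≤ e^{−ct}tr(Φ(0)ᵀQΦ(0))`; in particular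
`Φ(t) → 0` and `Φ` is bounded. -/
theorem transition_matrix_exponential_decay {n m : ℕ}
    (J₀ : Matrix (Fin n) (Fin n) ℝ) (J : Fin m → Matrix (Fin n) (Fin n) ℝ)
    (R Q : Matrix (Fin n) (Fin n) ℝ)
    (hJ₀ : J₀ᵀ = -J₀) (hJ : ∀ i, (J i)ᵀ = -(J i))
    (hR : R.PosDef) (hQ : Q.PosDef)
    (u : ℝ → Fin m → ℝ) (hu : Continuous u)
    (Φ : ℝ → Matrix (Fin n) (Fin n) ℝ)
    (hΦ : ∀ t ≥ (0:ℝ), HasDerivAt Φ ((J₀ + ∑ i, u t i • J i - R) * Q * Φ t) t)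
    (U : ℝ → ℝ) (hU : ∀ t, U t = (1/2) * ((Φ t)ᵀ * Q * Φ t).trace) :
    (∀ t ≥ (0:ℝ), HasDerivAt U (-((Φ t)ᵀ * Q * R * Q * Φ t).trace) t)
    ∧ (∃ c > (0:ℝ),
        (∀ t ≥ (0:ℝ), -((Φ t)ᵀ * Q * R * Q * Φ t).trace ≤ -c * U t)
        ∧ (∀ t ≥ (0:ℝ),
            ((Φ t)ᵀ * Q * Φ t).trace ≤ Real.exp (-c * t) * ((Φ 0)ᵀ * Q * Φ 0).trace))
    ∧ Filter.Tendsto Φ Filter.atTop (nhds 0)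
    ∧ (∃ M : ℝ, ∀ t ≥ (0:ℝ), ‖Φ t‖ ≤ M) := by
  have hQs : Qᵀ = Q := by
    rw [← Matrix.conjTranspose_eq_transpose_of_trivial]; exact hQ.1
  have hUe : U = fun s => (1/2) * ((Φ s)ᵀ * Q * Φ s).trace := funext hU
  -- Part 1: derivative of U
  have hderiv : ∀ t ≥ (0:ℝ), HasDerivAt U (-((Φ t)ᵀ * Q * R * Q * Φ t).trace) t := by
    intro t ht
    have h1 := hasDerivAt_traceform' Q (hΦ t ht)
    rw [hUe]
    have h2 := h1.const_mul (1/2 : ℝ)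
    refine h2.congr_deriv ?_
    set W := J₀ + ∑ i, u t i • J i with hW
    set D := (W - R) * Q * Φ t with hD
    have hWt : Wᵀ = -W := by
      rw [hW, Matrix.transpose_add, Matrix.transpose_sum, hJ₀]
      simp only [Matrix.transpose_smul, hJ, smul_neg]
      rw [neg_add, ← Finset.sum_neg_distrib]
    have e1 : (Dᵀ * Q * Φ t).trace = ((Φ t)ᵀ * Q * D).trace := by
      rw [← Matrix.trace_transpose ((Φ t)ᵀ * Q * D)]
      congr 1
      simp [Matrix.transpose_mul, hQs, Matrix.mul_assoc]
    have e2 : (Φ t)ᵀ * Q * D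
        = (Φ t)ᵀ * Q * W * Q * Φ t - (Φ t)ᵀ * Q * R * Q * Φ t := by
      rw [hD]; noncomm_ring
    have e3 : ((Φ t)ᵀ * Q * W * Q * Φ t).trace = 0 := by
      have hAt : (Q * Φ t)ᵀ = (Φ t)ᵀ * Q := by rw [Matrix.transpose_mul, hQs]
      have hM : (Φ t)ᵀ * Q * W * Q * Φ t = (Q * Φ t)ᵀ * W * (Q * Φ t) := by
        rw [hAt]; noncomm_ring
      rw [hM]
      exact skew_trace_zero' hWt
    rw [e1, e2, Matrix.trace_sub, e3]
    ring
  obtain ⟨c₀, hc₀, hcmp⟩ := key_compare' hR hQ hQs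
  obtain ⟨cQ, hcQ, hlQ⟩ := posdef_lower' hQ
  set c := 2 * c₀ with hc
  have hcpos : (0:ℝ) < c := by positivity
  have hbound1 : ∀ t ≥ (0:ℝ), -((Φ t)ᵀ * Q * R * Q * Φ t).trace ≤ -c * U t := by
    intro t ht
    have h := hcmp (Φ t)
    rw [hU t, hc]
    nlinarith [h]
  have hdecay : ∀ t ≥ (0:ℝ),
      ((Φ t)ᵀ * Q * Φ t).trace ≤ Real.exp (-c * t) * ((Φ 0)ᵀ * Q * Φ 0).trace := by
    intro t ht
    have cont : ContinuousOn U (Set.Icc 0 t) := fun x hx =>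
      ((hderiv x hx.1).continuousAt).continuousWithinAt
    have slope : ∀ x ∈ Set.Ico (0:ℝ) t, ∀ r,
        (fun x => -((Φ x)ᵀ * Q * R * Q * Φ x).trace) x < r →
        ∃ᶠ z in nhdsWithin x (Set.Ioi x), (z - x)⁻¹ * (U z - U x) < r := by
      intro x hx r hr
      have h := ((hderiv x hx.1).hasDerivWithinAt (s := Set.Ici x)).liminf_right_slope_le hr
      exact h.mono fun z hz => by rwa [slope_def_field, div_eq_inv_mul] at hz
    have bnd : ∀ x ∈ Set.Ico (0:ℝ) t,
        (fun x => -((Φ x)ᵀ * Q * R * Q * Φ x).trace) x ≤ -c * U x + 0 := by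
      intro x hx
      rw [add_zero]
      exact hbound1 x hx.1
    have hg := le_gronwallBound_of_liminf_deriv_right_le cont slope (le_refl (U 0)) bnd t
      (Set.right_mem_Icc.2 ht)
    rw [sub_zero, gronwallBound_ε0] at hg
    rw [hU t, hU 0] at hg
    linarith [hg]
  have hT0 : 0 ≤ ((Φ 0)ᵀ * Q * Φ 0).trace := trace_form_nonneg' hcQ hlQ (Φ 0)
  have hnorm : ∀ t ≥ (0:ℝ),
      ‖Φ t‖ ≤ Real.sqrt (Real.exp (-c * t) * ((Φ 0)ᵀ * Q * Φ 0).trace / cQ) := by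
    intro t ht
    refine (Matrix.norm_le_iff (Real.sqrt_nonneg _)).2 fun i j => ?_
    rw [Real.norm_eq_abs]
    apply Real.abs_le_sqrt
    have h1 := entry_sq_le' hcQ hlQ (Φ t) i j
    have h2 := hdecay t ht
    rw [le_div_iff₀ hcQ]
    nlinarith
  refine ⟨hderiv, ⟨c, hcpos, hbound1, hdecay⟩, ?_, ?_⟩
  · -- tendsto to zero
    have hexp : Filter.Tendsto (fun t => Real.exp (-c * t) * ((Φ 0)ᵀ * Q * Φ 0).trace / cQ)
        Filter.atTop (nhds 0) := by
      have h1 : Filter.Tendsto (fun t : ℝ => c * t) Filter.atTop Filter.atTop :=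
        Filter.Tendsto.const_mul_atTop hcpos Filter.tendsto_id
      have h2 : Filter.Tendsto (fun t : ℝ => Real.exp (-c * t)) Filter.atTop (nhds 0) := by
        have h3 := Real.tendsto_exp_neg_atTop_nhds_zero.comp h1
        exact h3.congr fun x => by simp [Function.comp, neg_mul]
      simpa using (h2.mul_const (((Φ 0)ᵀ * Q * Φ 0).trace)).div_const cQ
    have hsq : Filter.Tendsto
        (fun t => Real.sqrt (Real.exp (-c * t) * ((Φ 0)ᵀ * Q * Φ 0).trace / cQ))
        Filter.atTop (nhds 0) := by
      have := (Real.continuous_sqrt.tendsto 0).comp hexp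
      simpa [Function.comp_def] using this
    refine tendsto_zero_iff_norm_tendsto_zero.2 ?_
    refine squeeze_zero' ?_ ?_ hsq
    · exact Filter.Eventually.of_forall fun t => norm_nonneg _
    · filter_upwards [Filter.eventually_ge_atTop (0:ℝ)] with t ht using hnorm t ht
  · -- boundedness
    refine ⟨Real.sqrt (((Φ 0)ᵀ * Q * Φ 0).trace / cQ), fun t ht => ?_⟩
    refine le_trans (hnorm t ht) (Real.sqrt_le_sqrt ?_)
    have hexp1 : Real.exp (-c * t) ≤ 1 := Real.exp_le_one_iff.2 (by nlinarith)
    have h2 : Real.exp (-c * t) * ((Φ 0)ᵀ * Q * Φ 0).trace ≤ ((Φ 0)ᵀ * Q * Φ 0).trace := by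
      nlinarith [Real.exp_pos (-c * t)]
    exact div_le_div_of_nonneg_right h2 hcQ.le
end

section
/- (Exponential convergence of the open-loop emulator.) Let Jᵢ = −Jᵢᵀ ∈ ℝ^{n×n} (i = 0,…,m) skew-symmetric, R = Rᵀ > 0, Q > 0 diagonal, E ∈ ℝⁿ, u : ℝ≥0 → ℝᵐ continuous, and let x, ξ : ℝ≥0 → ℝⁿ both be differentiable solutions of ż(t) = (J₀ + Σᵢ₌₁ᵐ Jᵢuᵢ(t) − R)Qz(t) + (G₀ + Σᵢ₌₁ᵐ Gᵢuᵢ(t))E. Then there exist constants K > 0 and α > 0, depending only on Q and R, such that |x(t) − ξ(t)| ≤ K e^{−αt}|x(0) − ξ(0)| for all t ≥ 0. -/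
open Matrix

lemma posDef_quad_lower_bound {n : ℕ} {R : Matrix (Fin n) (Fin n) ℝ} (hR : R.PosDef) :
    ∃ c > (0:ℝ), ∀ v : Fin n → ℝ, c * (v ⬝ᵥ v) ≤ v ⬝ᵥ R.mulVec v := by
  rcases Nat.eq_zero_or_pos n with h0 | hn
  · refine ⟨1, one_pos, fun v => ?_⟩
    subst h0
    simp [dotProduct]
  · haveI : Nontrivial (EuclideanSpace ℝ (Fin n)) := by
      have : Nonempty (Fin n) := ⟨⟨0, hn⟩⟩
      infer_instance
    set f : EuclideanSpace ℝ (Fin n) → ℝ := fun v => (v : Fin n → ℝ) ⬝ᵥ R.mulVec v with hf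
    have hg : Continuous fun p : Fin n → ℝ => p ⬝ᵥ R.mulVec p := by
      simp only [Matrix.mulVec, dotProduct]
      exact continuous_finset_sum _ fun i _ => (continuous_apply i).mul
        (continuous_finset_sum _ fun j _ => continuous_const.mul (continuous_apply j))
    have hfc : Continuous f :=
      hg.comp (EuclideanSpace.equiv (Fin n) ℝ).continuous
    have hsc : IsCompact (Metric.sphere (0 : EuclideanSpace ℝ (Fin n)) 1) :=
      isCompact_sphere _ _
    have hsne : (Metric.sphere (0 : EuclideanSpace ℝ (Fin n)) 1).Nonempty :=
      NormedSpace.sphere_nonempty.mpr zero_le_one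
    obtain ⟨v₀, hv₀, hmin⟩ := hsc.exists_isMinOn hsne hfc.continuousOn
    have hv₀ne : (v₀ : Fin n → ℝ) ≠ 0 := by
      intro h
      have : ‖v₀‖ = 1 := by simpa using hv₀
      rw [show v₀ = 0 from by simpa using h] at this
      simp at this
    have hc : 0 < f v₀ := by
      have := hR.dotProduct_mulVec_pos hv₀ne
      simpa [hf] using this
    refine ⟨f v₀, hc, fun v => ?_⟩
    by_cases hv : v = 0
    · simp [hv]
    · set w : EuclideanSpace ℝ (Fin n) := WithLp.toLp 2 v
      have hwne : w ≠ 0 := fun h => hv (by simpa [w] using congrArg WithLp.ofLp h)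
      have hnw : 0 < ‖w‖ := norm_pos_iff.mpr hwne
      have hsph : (‖w‖⁻¹ • w) ∈ Metric.sphere (0 : EuclideanSpace ℝ (Fin n)) 1 := by
        simp [norm_smul, abs_of_pos (inv_pos.mpr hnw), inv_mul_cancel₀ hnw.ne']
      have h1 : f v₀ ≤ f (‖w‖⁻¹ • w) := hmin hsph
      have hscale : f (‖w‖⁻¹ • w) = (‖w‖⁻¹)^2 * f w := by
        simp only [hf]
        show ((‖w‖⁻¹ • w : Fin n → ℝ)) ⬝ᵥ R.mulVec (‖w‖⁻¹ • w : Fin n → ℝ) = _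
        rw [Matrix.mulVec_smul, smul_dotProduct, dotProduct_smul]
        simp [smul_eq_mul]; ring
      have hnorm : ‖w‖^2 = v ⬝ᵥ v := by
        rw [← real_inner_self_eq_norm_sq]
        rw [real_inner_self_eq_norm_sq, EuclideanSpace.norm_sq_eq]
        simp [w, dotProduct, Real.norm_eq_abs, sq_abs, sq]
      have : f v₀ * ‖w‖^2 ≤ f w := by
        rw [hscale] at h1
        have := mul_le_mul_of_nonneg_right h1 (le_of_lt (pow_pos hnw 2))
        calc f v₀ * ‖w‖^2 ≤ (‖w‖⁻¹)^2 * f w * ‖w‖^2 := this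
          _ = f w := by field_simp
      rw [hnorm] at this
      exact this

lemma skew_quad_zero {n : ℕ} {M : Matrix (Fin n) (Fin n) ℝ} (hM : Mᵀ = -M)
    (v : Fin n → ℝ) : v ⬝ᵥ M.mulVec v = 0 := by
  have h1 : v ⬝ᵥ M.mulVec v = (Mᵀ.mulVec v) ⬝ᵥ v := by
    rw [Matrix.dotProduct_mulVec]
    congr 1
    rw [← Matrix.vecMul_transpose, Matrix.transpose_transpose]
  rw [hM, Matrix.neg_mulVec, neg_dotProduct] at h1
  rw [dotProduct_comm] at h1 ⊢
  linarith

/-- Exponential convergence of the open-loop emulator. Any two solutions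
`x`, `ξ` of the converter dynamics satisfy `|x(t) − ξ(t)| ≤ K e^{−αt}|x(0) − ξ(0)|` for
some `K, α > 0` depending only on `Q` and `R` (Euclidean norm). -/
theorem emulator_exponential_convergence {n m : ℕ}
    (J₀ : Matrix (Fin n) (Fin n) ℝ) (J : Fin m → Matrix (Fin n) (Fin n) ℝ)
    (R Q G₀ : Matrix (Fin n) (Fin n) ℝ) (G : Fin m → Matrix (Fin n) (Fin n) ℝ)
    (E : Fin n → ℝ)
    (hJ₀ : J₀ᵀ = -J₀) (hJ : ∀ i, (J i)ᵀ = -(J i))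
    (hR : R.PosDef) (hQ : Q.PosDef) (hQdiag : Q.IsDiag)
    (u : ℝ → Fin m → ℝ) (hu : Continuous u)
    (x ξ : ℝ → Fin n → ℝ)
    (hx : ∀ t ≥ (0:ℝ), HasDerivAt x
      ((J₀ + ∑ i, u t i • J i - R).mulVec (Q.mulVec (x t))
        + (G₀ + ∑ i, u t i • G i).mulVec E) t)
    (hξ : ∀ t ≥ (0:ℝ), HasDerivAt ξ
      ((J₀ + ∑ i, u t i • J i - R).mulVec (Q.mulVec (ξ t))
        + (G₀ + ∑ i, u t i • G i).mulVec E) t) :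
    ∃ K > (0:ℝ), ∃ α > (0:ℝ), ∀ t ≥ (0:ℝ),
      Real.sqrt ((x t - ξ t) ⬝ᵥ (x t - ξ t))
        ≤ K * Real.exp (-α * t) * Real.sqrt ((x 0 - ξ 0) ⬝ᵥ (x 0 - ξ 0)) := by
  obtain ⟨c, hc, hcR⟩ := posDef_quad_lower_bound hR
  rcases Nat.eq_zero_or_pos n with h0 | hn
  · refine ⟨1, one_pos, 1, one_pos, fun t ht => ?_⟩
    subst h0
    simp [dotProduct]
  haveI : Nonempty (Fin n) := ⟨⟨0, hn⟩⟩
  -- diagonal entries of Q are positive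
  have hmv : ∀ (v : Fin n → ℝ) (i : Fin n), Q.mulVec v i = Q i i * v i := by
    intro v i
    rw [Matrix.mulVec, dotProduct, Finset.sum_eq_single i]
    · intro b _ hb
      rw [hQdiag (Ne.symm hb), zero_mul]
    · intro h; exact absurd (Finset.mem_univ i) h
  have hQd : ∀ i, 0 < Q i i := by
    intro i
    have h := hQ.dotProduct_mulVec_pos (x := Pi.single i 1) (by
      intro h
      have := congrFun h i
      simp at this)
    have hval : (star (Pi.single i 1) : Fin n → ℝ) ⬝ᵥ Q.mulVec (Pi.single i 1) = Q i i := by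
      simp [dotProduct, hmv, Pi.single_apply]
    rwa [hval] at h
  set qmin : ℝ := Finset.univ.inf' Finset.univ_nonempty (fun i => Q i i) with hqmin_def
  set qmax : ℝ := Finset.univ.sup' Finset.univ_nonempty (fun i => Q i i) with hqmax_def
  have hqmin_pos : 0 < qmin := (Finset.lt_inf'_iff _).mpr fun i _ => hQd i
  have hqmin_le : ∀ i, qmin ≤ Q i i := fun i => Finset.inf'_le _ (Finset.mem_univ i)
  have hqle : ∀ i, Q i i ≤ qmax := fun i => Finset.le_sup' (fun j => Q j j) (Finset.mem_univ i)
  have hqmax_pos : 0 < qmax := lt_of_lt_of_le hqmin_pos (le_trans (hqmin_le ⟨0, hn⟩) (hqle ⟨0, hn⟩))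
  set α : ℝ := c * qmin with hα_def
  have hα : 0 < α := mul_pos hc hqmin_pos
  set e : ℝ → Fin n → ℝ := fun t => x t - ξ t with he_def
  set A : ℝ → Matrix (Fin n) (Fin n) ℝ := fun t => J₀ + ∑ i, u t i • J i - R with hA_def
  have he : ∀ t ≥ (0:ℝ), HasDerivAt e ((A t).mulVec (Q.mulVec (e t))) t := by
    intro t ht
    have h := (hx t ht).sub (hξ t ht)
    convert h using 1
    show (A t).mulVec (Q.mulVec (x t - ξ t)) = _
    rw [Matrix.mulVec_sub, Matrix.mulVec_sub]
    abel
    all_goals rfl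
  set V : ℝ → ℝ := fun t => ∑ i, Q i i * (e t i * e t i) with hV_def
  set ed : ℝ → Fin n → ℝ := fun t => (A t).mulVec (Q.mulVec (e t)) with hed_def
  set D : ℝ → ℝ := fun t => ∑ i, Q i i * (ed t i * e t i + e t i * ed t i) with hD_def
  have hVd : ∀ t ≥ (0:ℝ), HasDerivAt V (D t) t := by
    intro t ht
    have hei := hasDerivAt_pi.mp (he t ht)
    exact HasDerivAt.fun_sum fun i _ => ((hei i).mul (hei i)).const_mul (Q i i)
  have hVnonneg : ∀ t, 0 ≤ V t :=
    fun t => Finset.sum_nonneg fun i _ => mul_nonneg (hQd i).le (mul_self_nonneg _)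
  have hVlow : ∀ t, qmin * (e t ⬝ᵥ e t) ≤ V t := by
    intro t
    rw [dotProduct, Finset.mul_sum]
    exact Finset.sum_le_sum fun i _ =>
      mul_le_mul_of_nonneg_right (hqmin_le i) (mul_self_nonneg _)
  have hVhigh : ∀ t, V t ≤ qmax * (e t ⬝ᵥ e t) := by
    intro t
    rw [dotProduct, Finset.mul_sum]
    exact Finset.sum_le_sum fun i _ =>
      mul_le_mul_of_nonneg_right (hqle i) (mul_self_nonneg _)
  have hkey : ∀ t, D t ≤ -(2 * α) * V t := by
    intro t
    set w : Fin n → ℝ := Q.mulVec (e t) with hw_def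
    have hD2 : D t = 2 * (w ⬝ᵥ ed t) := by
      rw [hD_def, dotProduct, Finset.mul_sum]
      refine Finset.sum_congr rfl fun i _ => ?_
      rw [hw_def, hmv]
      ring
    have hMskew : (J₀ + ∑ i, u t i • J i)ᵀ = -(J₀ + ∑ i, u t i • J i) := by
      rw [Matrix.transpose_add, Matrix.transpose_sum, hJ₀]
      simp only [Matrix.transpose_smul, hJ, smul_neg]
      rw [Finset.sum_neg_distrib]
      abel
    have hed2 : w ⬝ᵥ ed t = -(w ⬝ᵥ R.mulVec w) := by
      rw [hed_def]
      show w ⬝ᵥ (A t).mulVec w = _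
      rw [hA_def]
      show w ⬝ᵥ ((J₀ + ∑ i, u t i • J i) - R).mulVec w = _
      rw [Matrix.sub_mulVec, dotProduct_sub, skew_quad_zero hMskew]
      ring
    have hRw : c * (w ⬝ᵥ w) ≤ w ⬝ᵥ R.mulVec w := hcR w
    have hww : qmin * V t ≤ w ⬝ᵥ w := by
      rw [hV_def, dotProduct, Finset.mul_sum]
      refine Finset.sum_le_sum fun i _ => ?_
      rw [hw_def, hmv]
      have h1 : qmin * (Q i i * (e t i * e t i)) ≤ Q i i * (Q i i * (e t i * e t i)) :=
        mul_le_mul_of_nonneg_right (hqmin_le i)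
          (mul_nonneg (hQd i).le (mul_self_nonneg _))
      nlinarith [mul_self_nonneg (e t i)]
    have hVt := hVnonneg t
    rw [hD2, hed2]
    nlinarith
  -- Gronwall via monotonicity
  set g : ℝ → ℝ := fun t => Real.exp (2 * α * t) * V t with hg_def
  have hgd : ∀ t ≥ (0:ℝ), HasDerivAt g
      (Real.exp (2 * α * t) * (2 * α) * V t + Real.exp (2 * α * t) * D t) t := by
    intro t ht
    have h1 : HasDerivAt (fun s : ℝ => Real.exp (2 * α * s)) (Real.exp (2 * α * t) * (2 * α)) t := by
      simpa using ((hasDerivAt_id t).const_mul (2 * α)).exp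
    exact h1.mul (hVd t ht)
  have hanti : AntitoneOn g (Set.Ici (0:ℝ)) := by
    apply antitoneOn_of_deriv_nonpos (convex_Ici 0)
    · exact fun t ht => ((hgd t ht).continuousAt).continuousWithinAt
    · rw [interior_Ici]
      exact fun t ht => ((hgd t (le_of_lt ht)).differentiableAt).differentiableWithinAt
    · rw [interior_Ici]
      intro t ht
      rw [(hgd t (le_of_lt ht)).deriv]
      have hD := hkey t
      have hexp : 0 < Real.exp (2 * α * t) := Real.exp_pos _
      have hV := hVnonneg t
      nlinarith
  have hVdecay : ∀ t ≥ (0:ℝ), V t ≤ Real.exp (-(2 * α) * t) * V 0 := by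
    intro t ht
    have h := hanti Set.self_mem_Ici ht ht
    rw [hg_def] at h
    simp only [mul_zero, Real.exp_zero, one_mul] at h
    have hexp : 0 < Real.exp (2 * α * t) := Real.exp_pos _
    rw [neg_mul, Real.exp_neg]
    have := mul_le_mul_of_nonneg_left h (le_of_lt (inv_pos.mpr hexp))
    calc V t = (Real.exp (2 * α * t))⁻¹ * (Real.exp (2 * α * t) * V t) := by
          field_simp
      _ ≤ (Real.exp (2 * α * t))⁻¹ * V 0 := this
  refine ⟨Real.sqrt (qmax / qmin), Real.sqrt_pos.mpr (div_pos hqmax_pos hqmin_pos),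
    α, hα, fun t ht => ?_⟩
  set K : ℝ := Real.sqrt (qmax / qmin) with hK_def
  have hKexp : 0 ≤ K * Real.exp (-α * t) :=
    mul_nonneg (Real.sqrt_nonneg _) (Real.exp_pos _).le
  have hdt : (e t ⬝ᵥ e t) ≤ (K * Real.exp (-α * t))^2 * (e 0 ⬝ᵥ e 0) := by
    have h1 : qmin * (e t ⬝ᵥ e t) ≤ Real.exp (-(2 * α) * t) * (qmax * (e 0 ⬝ᵥ e 0)) :=
      le_trans (hVlow t) (le_trans (hVdecay t ht)
        (mul_le_mul_of_nonneg_left (hVhigh 0) (Real.exp_pos _).le))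
    have hK2 : (K * Real.exp (-α * t))^2 = (qmax / qmin) * Real.exp (-(2 * α) * t) := by
      rw [mul_pow, hK_def, Real.sq_sqrt (div_pos hqmax_pos hqmin_pos).le, ← Real.exp_nat_mul]
      ring_nf
    rw [hK2]
    rw [div_mul_eq_mul_div, div_mul_eq_mul_div, le_div_iff₀ hqmin_pos]
    nlinarith [Real.exp_pos (-(2 * α) * t)]
  calc Real.sqrt ((x t - ξ t) ⬝ᵥ (x t - ξ t))
      ≤ Real.sqrt ((K * Real.exp (-α * t))^2 * (e 0 ⬝ᵥ e 0)) := Real.sqrt_le_sqrt hdt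
    _ = K * Real.exp (-α * t) * Real.sqrt ((x 0 - ξ 0) ⬝ᵥ (x 0 - ξ 0)) := by
        rw [Real.sqrt_mul (sq_nonneg _), Real.sqrt_sq hKexp]
end
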